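/- arXiv:0906.5408 — 8 statements merged into one kernel-verified Lean document; each statement's English description precedes it below -/
import Mathlib

section
/- Let A be a C*-algebra, S a set, and K : S × S → A an A-positive definite kernel. For all n, m : ℕ, s : Fin n → S, t : Fin m → S, a : Fin n → A, b : Fin m → A one has the norm Schwarz inequality ‖∑_{i,k} (a i)⋆ * K(s i, t k) * (b k)‖² ≤ ‖∑_{i,j} (a i)⋆ * K(s i, s j) * (a j)‖ · ‖∑_{k,l} (b k)⋆ * K(t k, t l) * (b l)‖. -/
theorem kernel_comb
    {A : Type*} [NonUnitalCStarAlgebra A] [PartialOrder A] [StarOrderedRing A]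
    {S : Type*} (K : S × S → A)
    (hK : ∀ (n : ℕ) (s : Fin n → S) (a : Fin n → A),
      0 ≤ ∑ i, ∑ j, star (a i) * K (s i, s j) * a j)
    (n m : ℕ) (s : Fin n → S) (t : Fin m → S) (a : Fin n → A) (b : Fin m → A) :
    0 ≤ (∑ i, ∑ j, star (a i) * K (s i, s j) * a j)
      + (∑ i, ∑ k, star (a i) * K (s i, t k) * b k)
      + (∑ k, ∑ i, star (b k) * K (t k, s i) * a i)
      + (∑ k, ∑ l, star (b k) * K (t k, t l) * b l) := by
  have h := hK (n + m) (Fin.append s t) (Fin.append a b)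
  simp only [Fin.sum_univ_add, Fin.append_left, Fin.append_right, Finset.sum_add_distrib] at h
  calc (0:A) ≤ _ := h
    _ = _ := by abel

theorem kernel_cross_star
    {A : Type*} [NonUnitalCStarAlgebra A] [PartialOrder A] [StarOrderedRing A]
    {S : Type*} (K : S × S → A)
    (hK : ∀ (n : ℕ) (s : Fin n → S) (a : Fin n → A),
      0 ≤ ∑ i, ∑ j, star (a i) * K (s i, s j) * a j)
    (n m : ℕ) (s : Fin n → S) (t : Fin m → S) (a : Fin n → A) (b : Fin m → A) :
    (∑ k, ∑ i, star (b k) * K (t k, s i) * a i)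
      = star (∑ i, ∑ k, star (a i) * K (s i, t k) * b k) := by
  set P := ∑ i, ∑ j, star (a i) * K (s i, s j) * a j with hPdef
  set Z := ∑ i, ∑ k, star (a i) * K (s i, t k) * b k with hZdef
  set W := ∑ k, ∑ i, star (b k) * K (t k, s i) * a i with hWdef
  set Q := ∑ k, ∑ l, star (b k) * K (t k, t l) * b l with hQdef
  have hP : IsSelfAdjoint P := .of_nonneg (hK n s a)
  have hQ : IsSelfAdjoint Q := .of_nonneg (hK m t b)
  -- first equation: star Z + star W = Z + W
  have h1 : IsSelfAdjoint (P + Z + W + Q) := .of_nonneg (kernel_comb K hK n m s t a b)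
  have e1 : star Z + star W = Z + W := by
    have := h1.star_eq
    simp only [star_add, hP.star_eq, hQ.star_eq] at this
    have h' : P + (star Z + star W + Q) = P + (Z + W + Q) := by
      calc P + (star Z + star W + Q) = P + star Z + star W + Q := by abel
        _ = P + Z + W + Q := this
        _ = P + (Z + W + Q) := by abel
    have h'' := add_left_cancel h'
    have h3 : star Z + star W + Q = Z + W + Q := h''
    exact add_right_cancel h3
  -- second: with b replaced by I • b
  have h2 := kernel_comb K hK n m s t a (fun k => Complex.I • b k)
  have hz2 : (∑ i, ∑ k, star (a i) * K (s i, t k) * (Complex.I • b k)) = Complex.I • Z := by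
    rw [hZdef, Finset.smul_sum]
    refine Finset.sum_congr rfl fun i _ => ?_
    rw [Finset.smul_sum]
    exact Finset.sum_congr rfl fun k _ => by rw [mul_smul_comm]
  have hw2 : (∑ k, ∑ i, star (Complex.I • b k) * K (t k, s i) * a i) = (-Complex.I) • W := by
    rw [hWdef, Finset.smul_sum]
    refine Finset.sum_congr rfl fun k _ => ?_
    rw [Finset.smul_sum]
    refine Finset.sum_congr rfl fun i _ => ?_
    rw [star_smul, RCLike.star_def, Complex.conj_I, smul_mul_assoc, smul_mul_assoc]
  have hq2 : (∑ k, ∑ l, star (Complex.I • b k) * K (t k, t l) * (Complex.I • b l)) = Q := by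
    rw [hQdef]
    refine Finset.sum_congr rfl fun k _ => ?_
    refine Finset.sum_congr rfl fun l _ => ?_
    rw [star_smul, RCLike.star_def, Complex.conj_I, smul_mul_assoc, smul_mul_assoc,
      mul_smul_comm, smul_smul]
    simp
  rw [hz2, hw2, hq2] at h2
  have h2sa : IsSelfAdjoint (P + Complex.I • Z + (-Complex.I) • W + Q) := .of_nonneg h2
  have e2 : (-Complex.I) • star Z + Complex.I • star W = Complex.I • Z + (-Complex.I) • W := by
    have := h2sa.star_eq
    simp only [star_add, hP.star_eq, hQ.star_eq, star_smul, RCLike.star_def, Complex.conj_I,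
      star_neg, map_neg, neg_neg, neg_smul] at this
    have h' : P + (-(Complex.I • star Z) + Complex.I • star W + Q)
        = P + (Complex.I • Z + -(Complex.I • W) + Q) := by
      calc P + (-(Complex.I • star Z) + Complex.I • star W + Q)
          = P + -(Complex.I • star Z) + Complex.I • star W + Q := by abel
        _ = P + Complex.I • Z + -(Complex.I • W) + Q := this
        _ = P + (Complex.I • Z + -(Complex.I • W) + Q) := by abel
    have h'' := add_left_cancel h'
    have h3 := add_right_cancel h''
    simpa [neg_smul] using h3
  -- combine
  have e2' : star Z - star W = -Z + W := by
    have h := congrArg (fun x => Complex.I • x) e2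
    simp only [smul_add, smul_neg, smul_smul, Complex.I_mul_I, neg_smul, one_smul,
      neg_neg, neg_one_smul] at h
    abel_nf at h ⊢
    exact h
  have e3 : star W + star W = Z + Z := by
    calc star W + star W = (star Z + star W) - (star Z - star W) := by abel
      _ = (Z + W) - (-Z + W) := by rw [e1, e2']
      _ = Z + Z := by abel
  have e4 : (2:ℂ) • star W = (2:ℂ) • Z := by rw [two_smul, two_smul]; exact e3
  have e5 : star W = Z := smul_right_injective A two_ne_zero e4
  have := congrArg star e5
  rwa [star_star] at this

/-- The norm Schwarz inequality for an `A`-positive definite kernel. -/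
theorem kernel_norm_schwarz_inequality
    {A : Type*} [NonUnitalCStarAlgebra A] [PartialOrder A] [StarOrderedRing A]
    {S : Type*} (K : S × S → A)
    (hK : ∀ (n : ℕ) (s : Fin n → S) (a : Fin n → A),
      0 ≤ ∑ i, ∑ j, star (a i) * K (s i, s j) * a j) :
    ∀ (n m : ℕ) (s : Fin n → S) (t : Fin m → S) (a : Fin n → A) (b : Fin m → A),
      ‖∑ i, ∑ k, star (a i) * K (s i, t k) * b k‖ ^ 2 ≤
        ‖∑ i, ∑ j, star (a i) * K (s i, s j) * a j‖ *
          ‖∑ k, ∑ l, star (b k) * K (t k, t l) * b l‖ := by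
  intro n m s t a b
  set P := ∑ i, ∑ j, star (a i) * K (s i, s j) * a j with hPdef
  set Z := ∑ i, ∑ k, star (a i) * K (s i, t k) * b k with hZdef
  set Q := ∑ k, ∑ l, star (b k) * K (t k, t l) * b l with hQdef
  have hW : (∑ k, ∑ i, star (b k) * K (t k, s i) * a i) = star Z :=
    kernel_cross_star K hK n m s t a b
  have hPnn : 0 ≤ P := hK n s a
  have hPsa : IsSelfAdjoint P := .of_nonneg hPnn
  -- key positivity with coefficients (a i * c, b k)
  have key0 : ∀ c : A, 0 ≤ star c * P * c + star c * Z + star Z * c + Q := by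
    intro c
    have h := kernel_comb K hK n m s t (fun i => a i * c) b
    have S1 : (∑ i, ∑ j, star (a i * c) * K (s i, s j) * (a j * c))
        = star c * P * c := by
      rw [hPdef, Finset.mul_sum, Finset.sum_mul]
      refine Finset.sum_congr rfl fun i _ => ?_
      rw [Finset.mul_sum, Finset.sum_mul]
      refine Finset.sum_congr rfl fun j _ => ?_
      rw [star_mul]
      noncomm_ring
    have S2 : (∑ i, ∑ k, star (a i * c) * K (s i, t k) * b k)
        = star c * Z := by
      rw [hZdef, Finset.mul_sum]
      refine Finset.sum_congr rfl fun i _ => ?_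
      rw [Finset.mul_sum]
      refine Finset.sum_congr rfl fun k _ => ?_
      rw [star_mul]
      noncomm_ring
    have S3 : (∑ k, ∑ i, star (b k) * K (t k, s i) * (a i * c))
        = star Z * c := by
      rw [← hW, Finset.sum_mul]
      refine Finset.sum_congr rfl fun k _ => ?_
      rw [Finset.sum_mul]
      refine Finset.sum_congr rfl fun i _ => ?_
      noncomm_ring
    rwa [S1, S2, S3] at h
  set X := star Z * Z with hXdef
  have hXnn : 0 ≤ X := star_mul_self_nonneg Z
  -- scalar inequality for every positive real r
  have key : ∀ r : ℝ, 0 < r → 2 * r * ‖X‖ ≤ r * r * ‖P‖ * ‖X‖ + ‖Q‖ := by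
    intro r hr
    have h := key0 ((-r) • Z)
    have e1 : star ((-r : ℝ) • Z) = (-r : ℝ) • star Z := by
      rw [star_smul, star_trivial]
    rw [e1] at h
    have e2 : ((-r : ℝ) • star Z) * P * ((-r : ℝ) • Z) = (r * r) • (star Z * P * Z) := by
      rw [smul_mul_assoc, smul_mul_assoc, mul_smul_comm, smul_smul]
      norm_num
    have e3 : ((-r : ℝ) • star Z) * Z = (-r : ℝ) • X := by
      rw [smul_mul_assoc, hXdef]
    have e4 : star Z * ((-r : ℝ) • Z) = (-r : ℝ) • X := by
      rw [mul_smul_comm, hXdef]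
    rw [e2, e3, e4] at h
    -- conjugation bound
    have hconj : star Z * P * Z ≤ ‖P‖ • X := by
      rw [hXdef]
      exact CStarAlgebra.star_left_conjugate_le_norm_smul hPsa
    have hsm : (r * r) • (star Z * P * Z) ≤ (r * r) • (‖P‖ • X) :=
      smul_le_smul_of_nonneg_left hconj (by positivity)
    have h2 : 0 ≤ (r * r) • (‖P‖ • X) + (-r : ℝ) • X + (-r : ℝ) • X + Q := by
      calc (0:A) ≤ (r * r) • (star Z * P * Z) + (-r : ℝ) • X + (-r : ℝ) • X + Q := h
        _ ≤ _ := by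
          gcongr
    have h3 : (2 * r : ℝ) • X ≤ ((r * r) * ‖P‖) • X + Q := by
      rw [← sub_nonneg]
      calc (0:A) ≤ (r * r) • (‖P‖ • X) + (-r : ℝ) • X + (-r : ℝ) • X + Q := h2
        _ = ((r * r) * ‖P‖) • X + Q - (2 * r : ℝ) • X := by module
    have hLnn : 0 ≤ (2 * r : ℝ) • X := smul_nonneg (by positivity) hXnn
    have hnorm := CStarAlgebra.norm_le_norm_of_nonneg_of_le hLnn h3
    rw [norm_smul, Real.norm_of_nonneg (by positivity : (0:ℝ) ≤ 2 * r)] at hnorm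
    calc 2 * r * ‖X‖ ≤ ‖((r * r) * ‖P‖) • X + Q‖ := hnorm
      _ ≤ ‖((r * r) * ‖P‖) • X‖ + ‖Q‖ := norm_add_le _ _
      _ = r * r * ‖P‖ * ‖X‖ + ‖Q‖ := by
          rw [norm_smul, Real.norm_of_nonneg (by positivity)]
  have hNX : ‖X‖ = ‖Z‖ ^ 2 := by
    rw [hXdef, CStarRing.norm_star_mul_self, sq]
  rw [← hNX]
  rcases (norm_nonneg P).eq_or_lt with hP0 | hP0
  · -- ‖P‖ = 0 : show ‖X‖ = 0
    rcases (norm_nonneg X).eq_or_lt with hX0 | hX0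
    · rw [← hX0, ← hP0]
      positivity
    · exfalso
      have h := key ((‖Q‖ + 1) / (2 * ‖X‖)) (by positivity)
      rw [← hP0] at h
      have h2X : 2 * ((‖Q‖ + 1) / (2 * ‖X‖)) * ‖X‖ = ‖Q‖ + 1 := by
        field_simp
      nlinarith
  · have h := key ‖P‖⁻¹ (by positivity)
    have h2 : ‖P‖⁻¹ * ‖P‖⁻¹ * ‖P‖ = ‖P‖⁻¹ := by
      field_simp
    rw [h2] at h
    have h3 : ‖P‖⁻¹ * ‖X‖ ≤ ‖Q‖ := by linarith
    have h5 := mul_le_mul_of_nonneg_left h3 hP0.le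
    calc ‖X‖ = ‖P‖ * (‖P‖⁻¹ * ‖X‖) := by
          rw [← mul_assoc, mul_inv_cancel₀ (ne_of_gt hP0), one_mul]
      _ ≤ ‖P‖ * ‖Q‖ := h5
end

section
/- Let S be a *-semigroup, A a C*-algebra, and ω : S → A an A-positive definite function. Then for every q ∈ S with q⋆ = q and all n : ℕ, s : Fin n → S, a : Fin n → A one has ‖∑_{i,j} (a i)⋆ * ω((s i)⋆ * q * (s j)) * (a j)‖² ≤ ‖∑_{i,j} (a i)⋆ * ω((s i)⋆ * q * q * (s j)) * (a j)‖ · ‖∑_{i,j} (a i)⋆ * ω((s i)⋆ * (s j)) * (a j)‖. (This is the iterated-Schwarz step used in the proof of the equivalence of the boundedness conditions.) -/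
open Unitization in
lemma my_sandwich {A : Type*} [NonUnitalCStarAlgebra A] [PartialOrder A] [StarOrderedRing A]
    {x y : A} (hx : IsSelfAdjoint x) (h1 : x ≤ y) (h2 : -x ≤ y) : ‖x‖ ≤ ‖y‖ := by
  have hy0 : 0 ≤ y := by
    have h3 : 0 ≤ (y - x) + (y + x) := add_nonneg (sub_nonneg.mpr h1) (neg_le_iff_add_nonneg.mp h2)
    have h4 : y = (2⁻¹ : ℝ) • ((y - x) + (y + x)) := by module
    rw [h4]
    exact smul_nonneg (by norm_num) h3
  have hy : IsSelfAdjoint y := .of_nonneg hy0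
  rw [← Unitization.norm_inr (𝕜 := ℂ) x, ← Unitization.norm_inr (𝕜 := ℂ) y]
  have hX : IsSelfAdjoint (x : Unitization ℂ A) := hx.inr (R := ℂ)
  have hXY : (x : Unitization ℂ A) ≤ y := (Unitization.inr_le_iff x y hx hy).mpr h1
  have hXY' : -(x : Unitization ℂ A) ≤ y := by
    rw [← Unitization.inr_neg]
    exact (Unitization.inr_le_iff _ _ hx.neg hy).mpr h2
  have hYn : (y : Unitization ℂ A) ≤ algebraMap ℝ _ ‖(y : Unitization ℂ A)‖ :=
    (hy.inr (R := ℂ)).le_algebraMap_norm_self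
  have hb1 : ∀ r ∈ spectrum ℝ (x : Unitization ℂ A), r ≤ ‖(y : Unitization ℂ A)‖ :=
    (le_algebraMap_iff_spectrum_le hX).mp (hXY.trans hYn)
  have hb2 : ∀ r ∈ spectrum ℝ (-(x : Unitization ℂ A)), r ≤ ‖(y : Unitization ℂ A)‖ :=
    (le_algebraMap_iff_spectrum_le hX.neg).mp (hXY'.trans hYn)
  rcases CStarAlgebra.norm_or_neg_norm_mem_spectrum hX with h | h
  · exact hb1 _ h
  · exact hb2 _ (by rw [← spectrum.neg_eq]; exact Set.mem_neg.mpr (by simpa using h))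

/-- The iterated-Schwarz step: for an `A`-positive definite function `ω` on a
*-semigroup `S` and a selfadjoint element `q` of `S`,
`‖∑ (a i)⋆ ω((s i)⋆ q (s j)) (a j)‖² ≤
  ‖∑ (a i)⋆ ω((s i)⋆ q q (s j)) (a j)‖ * ‖∑ (a i)⋆ ω((s i)⋆ (s j)) (a j)‖`. -/
theorem iterated_schwarz_step
    {S : Type*} [Semigroup S] [StarMul S]
    {A : Type*} [NonUnitalCStarAlgebra A] [PartialOrder A] [StarOrderedRing A]
    (ω : S → A)
    (hpd : ∀ (n : ℕ) (s : Fin n → S) (a : Fin n → A),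
      0 ≤ ∑ i, ∑ j, star (a i) * ω (star (s i) * s j) * a j) :
    ∀ (q : S), star q = q → ∀ (n : ℕ) (s : Fin n → S) (a : Fin n → A),
      ‖∑ i, ∑ j, star (a i) * ω (star (s i) * q * s j) * a j‖ ^ 2 ≤
        ‖∑ i, ∑ j, star (a i) * ω (star (s i) * q * q * s j) * a j‖ *
          ‖∑ i, ∑ j, star (a i) * ω (star (s i) * s j) * a j‖ := by
  intro q hq n s a
  set C := ∑ i, ∑ j, star (a i) * ω (star (s i) * s j) * a j with hCdef
  set B := ∑ i, ∑ j, star (a i) * ω (star (s i) * q * s j) * a j with hBdef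
  set D := ∑ i, ∑ j, star (a i) * ω (star (s i) * q * q * s j) * a j with hDdef
  have key : ∀ c : ℝ, 0 ≤ C + (2*c) • B + (c^2) • D := by
    intro c
    have h := hpd (n+n) (Fin.append s fun i => q * s i) (Fin.append a fun i => c • a i)
    simp only [Fin.sum_univ_add, Fin.append_left, Fin.append_right, star_smul, star_trivial,
      star_mul, hq, smul_mul_assoc, mul_smul_comm, smul_smul, ← Finset.smul_sum,
      ← mul_assoc] at h
    simp only [Finset.sum_add_distrib, ← Finset.smul_sum] at h
    rw [hCdef, hBdef, hDdef]
    convert h using 1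
    module
  have hC : 0 ≤ C := hpd n s a
  have hD : 0 ≤ D := by
    rw [hDdef]
    simpa only [star_mul, hq, ← mul_assoc] using hpd n (fun i => q * s i) a
  have hBsa : IsSelfAdjoint B := by
    have h1 := IsSelfAdjoint.of_nonneg (key 1)
    have h2 := IsSelfAdjoint.of_nonneg (key (-1))
    have e : B = (4⁻¹ : ℝ) • ((C + (2*1:ℝ) • B + ((1:ℝ)^2) • D)
        - (C + (2*(-1):ℝ) • B + ((-1:ℝ)^2) • D)) := by module
    rw [e]
    exact (IsSelfAdjoint.all _).smul (h1.sub h2)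
  have bound : ∀ c : ℝ, 0 ≤ c → 2*c*‖B‖ ≤ ‖C‖ + c^2 * ‖D‖ := by
    intro c hc
    have hle : (2*c) • B ≤ C + (c^2) • D := by
      rw [← sub_nonneg]
      have h2 := key (-c)
      convert h2 using 1
      module
    have hge : -((2*c) • B) ≤ C + (c^2) • D := by
      rw [neg_le_iff_add_nonneg]
      have h1 := key c
      convert h1 using 1
      module
    have hx : IsSelfAdjoint ((2*c) • B) := (IsSelfAdjoint.all _).smul hBsa
    have hn := my_sandwich hx hle hge
    calc 2*c*‖B‖ = ‖(2*c) • B‖ := by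
          rw [norm_smul, Real.norm_eq_abs, abs_of_nonneg (by positivity)]
      _ ≤ ‖C + (c^2) • D‖ := hn
      _ ≤ ‖C‖ + ‖(c^2) • D‖ := norm_add_le _ _
      _ = ‖C‖ + c^2 * ‖D‖ := by
          rw [norm_smul, Real.norm_eq_abs, abs_of_nonneg (by positivity)]
  rcases eq_or_lt_of_le (norm_nonneg D) with hD0 | hD0
  · rcases eq_or_lt_of_le (norm_nonneg B) with hB0 | hB0
    · nlinarith [norm_nonneg C, norm_nonneg D]
    · exfalso
      have h1 := bound (‖C‖/‖B‖ + 1) (by positivity)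
      rw [← hD0] at h1
      have : (‖C‖/‖B‖) * ‖B‖ = ‖C‖ := div_mul_cancel₀ _ (ne_of_gt hB0)
      nlinarith [norm_nonneg C]
  · have hd : ‖D‖ ≠ 0 := ne_of_gt hD0
    have h := bound (‖B‖/‖D‖) (by positivity)
    have e1 : 2*(‖B‖/‖D‖)*‖B‖ = 2*(‖B‖^2/‖D‖) := by field_simp
    have e2 : (‖B‖/‖D‖)^2*‖D‖ = ‖B‖^2/‖D‖ := by field_simp
    rw [e1, e2] at h
    have key2 : ‖B‖^2 / ‖D‖ ≤ ‖C‖ := by linarith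
    calc ‖B‖^2 = (‖B‖^2/‖D‖)*‖D‖ := by field_simp
      _ ≤ ‖C‖*‖D‖ := mul_le_mul_of_nonneg_right key2 hD0.le
      _ = ‖D‖*‖C‖ := mul_comm _ _
end

section
/- Let S be a *-semigroup, A a unital C*-algebra, and ω : S → A an A-positive definite function. The following are equivalent: (α) ω(s⋆) = ω(s)⋆ for all s ∈ S, and there is a constant c > 0 such that c • ∑_{i,j} (a i)⋆ * ω(s i)⋆ * ω(s j) * (a j) ≤ ∑_{i,j} (a i)⋆ * ω((s i)⋆ * (s j)) * (a j) for all n : ℕ, s : Fin n → S, a : Fin n → A; (β) ω extends to a positive definite function on the unitization of S, i.e. there exists b ∈ A such that for all n : ℕ, s : Fin n → S, a : Fin n → A and a₀ ∈ A one has 0 ≤ ∑_{i,j} (a i)⋆ * ω((s i)⋆ * (s j)) * (a j) + ∑_i (a i)⋆ * ω((s i)⋆) * a₀ + ∑_j a₀⋆ * ω(s j) * (a j) + a₀⋆ * b * a₀. -/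
private lemma aux_cross1 {A : Type*} [Ring A] [StarRing A] {n : ℕ} (w a : Fin n → A) (a₀ : A) :
    ∑ i, star (a i) * star (w i) * a₀ = star (∑ j, w j * a j) * a₀ := by
  rw [star_sum, Finset.sum_mul]
  exact Finset.sum_congr rfl fun i _ => by rw [star_mul]

private lemma aux_cross2 {A : Type*} [Ring A] [StarRing A] {n : ℕ} (w a : Fin n → A) (a₀ : A) :
    ∑ j, star a₀ * w j * a j = star a₀ * ∑ j, w j * a j := by
  rw [Finset.mul_sum]
  exact Finset.sum_congr rfl fun j _ => by rw [mul_assoc]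

private lemma aux_quad {A : Type*} [Ring A] [StarRing A] {n : ℕ} (w a : Fin n → A) :
    ∑ i, ∑ j, star (a i) * star (w i) * w j * a j
      = star (∑ j, w j * a j) * ∑ j, w j * a j := by
  rw [star_sum, Finset.sum_mul_sum]
  refine Finset.sum_congr rfl fun i _ => Finset.sum_congr rfl fun j _ => ?_
  rw [star_mul]; noncomm_ring

/-- For an `A`-positive definite function `ω` on a *-semigroup `S`, with `A` a
unital C*-algebra, condition (α) (Hermitian symmetry plus the quadratic inequality with a
constant `c > 0`) is equivalent to condition (β) (extendibility to a positive definite function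
on the unitization of `S`). -/
theorem extension_property_iff_extendible
    {S : Type*} [Semigroup S] [StarMul S]
    {A : Type*} [CStarAlgebra A] [PartialOrder A] [StarOrderedRing A]
    (ω : S → A)
    (hpd : ∀ (n : ℕ) (s : Fin n → S) (a : Fin n → A),
      0 ≤ ∑ i, ∑ j, star (a i) * ω (star (s i) * s j) * a j) :
    ((∀ s : S, ω (star s) = star (ω s)) ∧
      ∃ c : ℝ, 0 < c ∧ ∀ (n : ℕ) (s : Fin n → S) (a : Fin n → A),
        c • ∑ i, ∑ j, star (a i) * star (ω (s i)) * ω (s j) * a j ≤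
          ∑ i, ∑ j, star (a i) * ω (star (s i) * s j) * a j)
    ↔
    (∃ b : A, ∀ (n : ℕ) (s : Fin n → S) (a : Fin n → A) (a₀ : A),
      0 ≤ (∑ i, ∑ j, star (a i) * ω (star (s i) * s j) * a j) +
        (∑ i, star (a i) * ω (star (s i)) * a₀) +
        (∑ j, star a₀ * ω (s j) * a j) + star a₀ * b * a₀) := by
  constructor
  · rintro ⟨hsym, c, hc, hineq⟩
    refine ⟨c⁻¹ • 1, fun n s a a₀ => ?_⟩
    set v : A := ∑ j, ω (s j) * a j with hv
    have h1 : ∑ i, star (a i) * ω (star (s i)) * a₀ = star v * a₀ := by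
      rw [← aux_cross1 (fun j => ω (s j)) a a₀]
      exact Finset.sum_congr rfl fun i _ => by rw [hsym]
    have h2 : ∑ j, star a₀ * ω (s j) * a j = star a₀ * v :=
      aux_cross2 (fun j => ω (s j)) a a₀
    have h3 : ∑ i, ∑ j, star (a i) * star (ω (s i)) * ω (s j) * a j = star v * v :=
      aux_quad (fun j => ω (s j)) a
    have hQ : c • (star v * v) ≤ ∑ i, ∑ j, star (a i) * ω (star (s i) * s j) * a j := by
      rw [← h3]; exact hineq n s a
    have hb : star a₀ * (c⁻¹ • (1:A)) * a₀ = c⁻¹ • (star a₀ * a₀) := by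
      rw [mul_smul_comm, smul_mul_assoc, mul_one]
    rw [h1, h2, hb]
    have hc0 : c ≠ 0 := hc.ne'
    have expand : c • (star v * v) + star v * a₀ + star a₀ * v + c⁻¹ • (star a₀ * a₀)
        = c • (star (v + c⁻¹ • a₀) * (v + c⁻¹ • a₀)) := by
      simp only [star_add, star_smul, star_trivial, add_mul, mul_add,
        smul_mul_assoc, mul_smul_comm, smul_smul]
      match_scalars <;> field_simp
    have hnn : 0 ≤ c • (star v * v) + star v * a₀ + star a₀ * v + c⁻¹ • (star a₀ * a₀) := by
      rw [expand]
      exact smul_nonneg hc.le (star_mul_self_nonneg _)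
    exact hnn.trans (add_le_add_left (add_le_add_left (add_le_add_left hQ _) _) _)
  · rintro ⟨b, hb⟩
    have hb0 : 0 ≤ b := by simpa using hb 0 Fin.elim0 Fin.elim0 1
    have hbsa : IsSelfAdjoint b := IsSelfAdjoint.of_nonneg hb0
    have hC : ∀ (s : S) (a₀ : A),
        IsSelfAdjoint (ω (star s) * a₀ + star a₀ * ω s) := by
      intro s a₀
      have hX : 0 ≤ ω (star s * s) + ω (star s) * a₀ + star a₀ * ω s + star a₀ * b * a₀ := by
        simpa using hb 1 (fun _ => s) (fun _ => 1) a₀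
      have hXsa : IsSelfAdjoint
          (ω (star s * s) + ω (star s) * a₀ + star a₀ * ω s + star a₀ * b * a₀) :=
        IsSelfAdjoint.of_nonneg hX
      have hD : IsSelfAdjoint (ω (star s * s)) :=
        IsSelfAdjoint.of_nonneg (by simpa using hpd 1 (fun _ => s) (fun _ => 1))
      have hE : IsSelfAdjoint (star a₀ * b * a₀) := hbsa.conjugate' a₀
      have := (hXsa.sub hD).sub hE
      convert this using 1
      abel
    have hsym : ∀ s : S, ω (star s) = star (ω s) := by
      intro s
      have hi : ω (star s) + ω s = star (ω (star s)) + star (ω s) := by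
        have h := (hC s 1).star_eq
        simpa [star_add] using h.symm
      have hii : ω (star s) - ω s = star (ω s) - star (ω (star s)) := by
        have h := (hC s (Complex.I • 1)).star_eq
        have h' : (-Complex.I) • star (ω (star s)) + Complex.I • star (ω s)
            = Complex.I • ω (star s) + (-Complex.I) • ω s := by
          simpa [star_add, star_smul, star_mul, mul_smul_comm, smul_mul_assoc,
            Complex.conj_I, smul_smul] using h
        have h2 := congrArg (fun x => (-Complex.I) • x) h'
        simp only [smul_add, smul_smul] at h2
        simp only [neg_mul, mul_neg, neg_neg, Complex.I_mul_I, neg_smul, one_smul] at h2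
        -- h2 : -star (ω (star s)) + star (ω s) = ω (star s) + -ω s
        have h2' := h2.symm
        convert h2' using 1 <;> abel
      have h2 : ω (star s) + ω (star s) = star (ω s) + star (ω s) := by
        calc ω (star s) + ω (star s)
            = (ω (star s) + ω s) + (ω (star s) - ω s) := by abel
          _ = (star (ω (star s)) + star (ω s)) + (star (ω s) - star (ω (star s))) := by
              rw [hi, hii]
          _ = star (ω s) + star (ω s) := by abel
      have h3 : (2:ℝ) • ω (star s) = (2:ℝ) • star (ω s) := by
        rw [two_smul, two_smul]; exact h2
      exact smul_right_injective A (two_ne_zero) h3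
    refine ⟨hsym, ?_⟩
    set t : ℝ := (‖b‖ + 1)⁻¹ with ht
    have hbn : (0:ℝ) < ‖b‖ + 1 := by positivity
    have htpos : 0 < t := by positivity
    refine ⟨t, htpos, fun n s a => ?_⟩
    set v : A := ∑ j, ω (s j) * a j with hv
    have h3 : ∑ i, ∑ j, star (a i) * star (ω (s i)) * ω (s j) * a j = star v * v :=
      aux_quad (fun j => ω (s j)) a
    rw [h3]
    have key := hb n s a (-(t • v))
    have h1 : ∑ i, star (a i) * ω (star (s i)) * (-(t • v)) = -(t • (star v * v)) := by
      rw [show (∑ i, star (a i) * ω (star (s i)) * (-(t • v)))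
          = ∑ i, star (a i) * star (ω (s i)) * (-(t • v)) from
        Finset.sum_congr rfl fun i _ => by rw [hsym],
        aux_cross1 (fun j => ω (s j)) a, mul_neg, mul_smul_comm]
    have h2 : ∑ j, star (-(t • v)) * ω (s j) * a j = -(t • (star v * v)) := by
      rw [aux_cross2 (fun j => ω (s j)) a, star_neg, star_smul, star_trivial,
        neg_mul, smul_mul_assoc]
    have h4 : star (-(t • v)) * b * (-(t • v)) = (t * t) • (star v * b * v) := by
      rw [star_neg, star_smul, star_trivial, neg_mul, neg_mul, mul_neg, neg_neg,
        smul_mul_assoc, smul_mul_assoc, mul_smul_comm, smul_smul]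
    rw [h1, h2, h4] at key
    have hcb : star v * b * v ≤ ‖b‖ • (star v * v) :=
      CStarAlgebra.star_left_conjugate_le_norm_smul hbsa
    have hvv : (0:A) ≤ star v * v := star_mul_self_nonneg v
    have hinv : t * (‖b‖ + 1) = 1 := inv_mul_cancel₀ hbn.ne'
    have hcoef : t * t * ‖b‖ ≤ t := by
      calc t * t * ‖b‖ ≤ t * t * (‖b‖ + 1) := by nlinarith [htpos.le]
        _ = t * (t * (‖b‖ + 1)) := by ring
        _ = t := by rw [hinv, mul_one]
    have h5 : (t * t) • (star v * b * v) ≤ t • (star v * v) := by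
      calc (t * t) • (star v * b * v) ≤ (t * t) • (‖b‖ • (star v * v)) :=
            smul_le_smul_of_nonneg_left hcb (mul_nonneg htpos.le htpos.le)
        _ = (t * t * ‖b‖) • (star v * v) := by rw [smul_smul]
        _ ≤ t • (star v * v) := smul_le_smul_of_nonneg_right hcoef hvv
    have h6 : t • (star v * v) + t • (star v * v) - (t * t) • (star v * b * v)
        ≤ ∑ i, ∑ j, star (a i) * ω (star (s i) * s j) * a j := by
      rw [← sub_nonneg]
      convert key using 1
      abel
    have h7 : t • (star v * v)
        ≤ t • (star v * v) + t • (star v * v) - (t * t) • (star v * b * v) := by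
      have h8 := sub_le_sub_left h5 (t • (star v * v) + t • (star v * v))
      calc t • (star v * v)
          = t • (star v * v) + t • (star v * v) - t • (star v * v) := by abel
        _ ≤ _ := h8
    exact h7.trans h6
end

section
/- Let S be a *-semigroup, A a C*-algebra, E a Hilbert A-module, ω : S → A a function, e : S → E a family with ⟪e s, e t⟫ = ω(s⋆ * t) for all s, t ∈ S, and v ∈ E a vector with ω(s) = ⟪v, e s⟫ for all s ∈ S. Then for all n : ℕ, s : Fin n → S, a : Fin n → A one has ∑_{i,j} (a i)⋆ * ω(s i)⋆ * ω(s j) * (a j) ≤ ‖v‖² • ∑_{i,j} (a i)⋆ * ω((s i)⋆ * (s j)) * (a j). -/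
/-- The Hilbert C⋆-module class as it stood in the older Mathlib: a *right* module
(action of `Aᵐᵒᵖ`), with `⟪x, y <• a⟫ = ⟪x, y⟫ * a`. -/
class CStarModuleOld (A : outParam Type*) (E : Type*) [NonUnitalSemiring A] [StarRing A]
    [Module ℂ A] [AddCommGroup E] [Module ℂ E] [PartialOrder A] [SMul Aᵐᵒᵖ E] [Norm A] [Norm E]
    extends Inner A E where
  inner_add_right {x} {y} {z} : inner x (y + z) = inner x y + inner x z
  inner_self_nonneg {x} : 0 ≤ inner x x
  inner_self {x} : inner x x = 0 ↔ x = 0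
  inner_op_smul_right {a : A} {x y : E} : inner x (MulOpposite.op a • y) = inner x y * a
  inner_smul_right_complex {z : ℂ} {x} {y} : inner x (z • y) = z • inner x y
  star_inner x y : star (inner x y) = inner y x
  norm_eq_sqrt_norm_inner_self x : ‖x‖ = Real.sqrt ‖inner x x‖

namespace CStarModuleOld

variable {A : Type*} [NonUnitalCStarAlgebra A] [PartialOrder A] [StarOrderedRing A]
  {E : Type*} [NormedAddCommGroup E] [NormedSpace ℂ E] [SMul Aᵐᵒᵖ E] [CStarModuleOld A E]

/-- The inner product in the second variable as an additive map. -/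
def innerAdd (x : E) : E →+ A :=
  AddMonoidHom.mk' (fun y => inner A x y) (fun _ _ => CStarModuleOld.inner_add_right)

lemma inner_sum_right' {ι : Type*} {s : Finset ι} {x : E} {y : ι → E} :
    inner A x (∑ i ∈ s, y i) = ∑ i ∈ s, inner A x (y i) :=
  map_sum (innerAdd x) y s

lemma inner_sum_left' {ι : Type*} {s : Finset ι} {x : ι → E} {y : E} :
    inner A (∑ i ∈ s, x i) y = ∑ i ∈ s, inner A (x i) y := by
  rw [← CStarModuleOld.star_inner, inner_sum_right', star_sum]
  simp only [CStarModuleOld.star_inner]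

lemma inner_op_smul_left' {a : A} {x y : E} :
    inner A (MulOpposite.op a • x) y = star a * inner A x y := by
  rw [← CStarModuleOld.star_inner, CStarModuleOld.inner_op_smul_right, star_mul,
    CStarModuleOld.star_inner]

lemma inner_sub_right' {x y z : E} : inner A x (y - z) = inner A x y - inner A x z :=
  map_sub (innerAdd x) y z

lemma inner_sub_left' {x y z : E} : inner A (x - y) z = inner A x z - inner A y z := by
  rw [← CStarModuleOld.star_inner, inner_sub_right', star_sub, CStarModuleOld.star_inner,
    CStarModuleOld.star_inner]

lemma inner_zero_right' {x : E} : inner A x (0 : E) = 0 :=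
  map_zero (innerAdd x)

lemma inner_real_smul_right' {r : ℝ} {x y : E} :
    inner A x ((r : ℂ) • y) = r • inner A x y := by
  rw [CStarModuleOld.inner_smul_right_complex, Complex.coe_smul]

lemma inner_real_smul_left' {r : ℝ} {x y : E} :
    inner A ((r : ℂ) • x) y = r • inner A x y := by
  rw [← CStarModuleOld.star_inner, inner_real_smul_right', star_smul, star_trivial,
    CStarModuleOld.star_inner]

lemma norm_sq_eq' {x : E} : ‖x‖ ^ 2 = ‖inner A x x‖ := by
  rw [CStarModuleOld.norm_eq_sqrt_norm_inner_self (A := A) x, Real.sq_sqrt (norm_nonneg _)]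

lemma inner_mul_inner_swap_le' (x y : E) :
    inner A y x * inner A x y ≤ ‖x‖ ^ 2 • inner A y y := by
  rcases eq_or_ne x 0 with h | h
  · subst h
    rw [inner_zero_right', zero_mul, norm_zero]
    simp
  · have hpos : 0 < ‖x‖ := norm_pos_iff.mpr h
    set r : ℝ := ‖x‖ ^ 2 with hr
    have h₁ : ∀ a : A, (0 : A) ≤ r • (star a * a) - r • (star a * inner A x y)
        - r • (inner A y x * a) + r • (r • inner A y y) := fun a => by
      calc (0 : A) ≤ inner A (MulOpposite.op a • x - (r : ℂ) • y)
              (MulOpposite.op a • x - (r : ℂ) • y) := CStarModuleOld.inner_self_nonneg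
        _ = star a * inner A x x * a - r • (star a * inner A x y)
              - r • (inner A y x * a) + r • (r • inner A y y) := by
            simp only [inner_sub_left', inner_sub_right', inner_op_smul_left',
              CStarModuleOld.inner_op_smul_right, inner_real_smul_left',
              inner_real_smul_right', mul_smul_comm, smul_mul_assoc, smul_sub, sub_mul, mul_assoc]
            abel
        _ ≤ r • (star a * a) - r • (star a * inner A x y)
              - r • (inner A y x * a) + r • (r • inner A y y) := by
            gcongr
            calc _ ≤ ‖inner A x x‖ • (star a * a) :=
                  CStarAlgebra.star_left_conjugate_le_norm_smul (CStarModuleOld.star_inner x x)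
              _ = r • (star a * a) := by rw [hr, norm_sq_eq']
    specialize h₁ (inner A x y)
    rw [CStarModuleOld.star_inner, sub_self, zero_sub, le_neg_add_iff_add_le, add_zero] at h₁
    rwa [smul_le_smul_iff_of_pos_left (pow_pos hpos _)] at h₁

end CStarModuleOld

/-- If `ω(s) = ⟪v, e s⟫` with `⟪e s, e t⟫ = ω(s⋆ t)` in a Hilbert `A`-module, then
`∑ (a i)⋆ ω(s i)⋆ ω(s j) (a j) ≤ ‖v‖² • ∑ (a i)⋆ ω((s i)⋆ (s j)) (a j)`. -/
theorem inner_representation_quadratic_bound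
    {S : Type*} [Semigroup S] [StarMul S]
    {A : Type*} [NonUnitalCStarAlgebra A] [PartialOrder A] [StarOrderedRing A]
    {E : Type*} [NormedAddCommGroup E] [NormedSpace ℂ E] [SMul Aᵐᵒᵖ E]
    [CStarModuleOld A E] [CompleteSpace E]
    (ω : S → A) (e : S → E)
    (he : ∀ s t : S, inner (𝕜 := A) (e s) (e t) = ω (star s * t))
    (v : E) (hv : ∀ s : S, ω s = inner (𝕜 := A) v (e s)) :
    ∀ (n : ℕ) (s : Fin n → S) (a : Fin n → A),
      ∑ i, ∑ j, star (a i) * star (ω (s i)) * ω (s j) * a j ≤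
        (‖v‖ ^ 2) • ∑ i, ∑ j, star (a i) * ω (star (s i) * s j) * a j := by
  intro n s a
  set x : E := ∑ j, MulOpposite.op (a j) • e (s j) with hx
  have hvx : inner (𝕜 := A) v x = ∑ j, ω (s j) * a j := by
    simp [hx, CStarModuleOld.inner_sum_right', CStarModuleOld.inner_op_smul_right, hv]
  have hxx : inner (𝕜 := A) x x =
      ∑ i, ∑ j, star (a i) * ω (star (s i) * s j) * a j := by
    simp [hx, CStarModuleOld.inner_sum_right', CStarModuleOld.inner_sum_left',
      CStarModuleOld.inner_op_smul_right, CStarModuleOld.inner_op_smul_left', he,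
      Finset.sum_mul, mul_assoc]
    exact Finset.sum_comm
  have key := CStarModuleOld.inner_mul_inner_swap_le' (A := A) (E := E) v x
  rw [hxx] at key
  have hlhs : inner (𝕜 := A) x v * inner (𝕜 := A) v x =
      ∑ i, ∑ j, star (a i) * star (ω (s i)) * ω (s j) * a j := by
    rw [← CStarModuleOld.star_inner, hvx, star_sum, Finset.sum_mul_sum]
    refine Finset.sum_congr rfl fun i _ => Finset.sum_congr rfl fun j _ => ?_
    simp [star_mul, mul_assoc]
  rwa [hlhs] at key
end

section
/- Let S be a *-semigroup, A a unital C*-algebra, and ω : S → A an A-positive definite function. Suppose ω has an approximate unit: there exist a nonempty directed preordered type ι and nets u : ι → S, a : ι → A such that for every s ∈ S, (a λ)⋆ * ω((u λ) * s) converges to ω(s) along the atTop filter on ι, ω(s * (u λ)⋆) * (a λ) converges to ω(s) along atTop, and there is M ≥ 0 with ‖(a λ)⋆ * ω((u λ) * (u λ)⋆) * (a λ)‖ ≤ M for all λ ∈ ι. Then ω has the extension property: ω(s⋆) = ω(s)⋆ for all s ∈ S, and there is a constant c > 0 such that c • ∑_{i,j} (a i)⋆ * ω(s i)⋆ * ω(s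 j) * (a j) ≤ ∑_{i,j} (a i)⋆ * ω((s i)⋆ * (s j)) * (a j) for all finite families s : Fin n → S, a : Fin n → A. -/
open Filter Topology

/-- Hermitian symmetry of an `A`-positive definite kernel: `star (ω (p⋆ q)) = ω (q⋆ p)`. -/
lemma herm_aux {S : Type*} [Semigroup S] [StarMul S]
    {A : Type*} [CStarAlgebra A] [PartialOrder A] [StarOrderedRing A]
    (ω : S → A)
    (hpd : ∀ (n : ℕ) (s : Fin n → S) (a : Fin n → A),
      0 ≤ ∑ i, ∑ j, star (a i) * ω (star (s i) * s j) * a j)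
    (p q : S) : star (ω (star p * q)) = ω (star q * p) := by
  have sa : ∀ x y : A, IsSelfAdjoint (star x * ω (star p * p) * x + star x * ω (star p * q) * y
      + star y * ω (star q * p) * x + star y * ω (star q * q) * y) := by
    intro x y
    refine IsSelfAdjoint.of_nonneg ?_
    have := hpd 2 ![p, q] ![x, y]
    simpa [Fin.sum_univ_two, add_assoc] using this
  set P := ω (star p * q)
  set Q := ω (star q * p)
  have hpp : IsSelfAdjoint (ω (star p * p)) := by simpa using sa 1 0
  have hqq : IsSelfAdjoint (ω (star q * q)) := by simpa using sa 0 1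
  have h1 : star P + star Q = P + Q := by
    have h := (sa 1 1).star_eq
    simp only [star_one, one_mul, mul_one, star_add, hpp.star_eq, hqq.star_eq] at h
    have e1 : star P + star Q
        = (ω (star p * p) + star P + star Q + ω (star q * q)) - ω (star p * p)
          - ω (star q * q) := by abel
    rw [e1, h]; abel
  have h2 : star P - star Q = Q - P := by
    have h := (sa 1 ((Complex.I : ℂ) • 1)).star_eq
    simp only [star_one, one_mul, mul_one, star_smul, Complex.star_def, Complex.conj_I,
      star_add, star_mul, hpp.star_eq, hqq.star_eq, smul_mul_assoc, mul_smul_comm, neg_smul,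
      star_neg, smul_smul, Complex.I_mul_I, neg_mul, mul_neg, neg_neg, one_smul, smul_neg,
      hpp, hqq] at h
    have e1 : Complex.I • (star Q - star P)
        = (ω (star p * p) + -(Complex.I • star P) + Complex.I • star Q + ω (star q * q))
          - ω (star p * p) - ω (star q * q) := by module
    rw [h] at e1
    have e2 : (ω (star p * p) + Complex.I • P + -(Complex.I • Q) + ω (star q * q))
        - ω (star p * p) - ω (star q * q) = Complex.I • (P - Q) := by module
    rw [e2] at e1
    have e3 := smul_right_injective A Complex.I_ne_zero e1
    simpa [neg_neg, neg_sub] using congrArg Neg.neg e3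
  have h3 : (2:ℂ) • star P = (2:ℂ) • Q := by
    rw [two_smul, two_smul]
    calc star P + star P = (star P + star Q) + (star P - star Q) := by abel
    _ = (P + Q) + (Q - P) := by rw [h1, h2]
    _ = Q + Q := by abel
  exact smul_right_injective A two_ne_zero h3

/-- If an `A`-positive definite function `ω` on a *-semigroup `S` (with `A` a
unital C*-algebra) has an approximate unit, then `ω` has the extension property. -/
theorem approximate_unit_implies_extension_property
    {S : Type*} [Semigroup S] [StarMul S]
    {A : Type*} [CStarAlgebra A] [PartialOrder A] [StarOrderedRing A]
    (ω : S → A)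
    (hpd : ∀ (n : ℕ) (s : Fin n → S) (a : Fin n → A),
      0 ≤ ∑ i, ∑ j, star (a i) * ω (star (s i) * s j) * a j)
    (happrox : ∃ (ι : Type) (_ : Preorder ι) (_ : Nonempty ι) (_ : IsDirected ι (· ≤ ·))
      (u : ι → S) (a : ι → A),
      (∀ s : S, Tendsto (fun l => star (a l) * ω (u l * s)) atTop (𝓝 (ω s))) ∧
      (∀ s : S, Tendsto (fun l => ω (s * star (u l)) * a l) atTop (𝓝 (ω s))) ∧
      (∃ M : ℝ, 0 ≤ M ∧ ∀ l : ι, ‖star (a l) * ω (u l * star (u l)) * a l‖ ≤ M)) :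
    (∀ s : S, ω (star s) = star (ω s)) ∧
      ∃ c : ℝ, 0 < c ∧ ∀ (n : ℕ) (s : Fin n → S) (a : Fin n → A),
        c • ∑ i, ∑ j, star (a i) * star (ω (s i)) * ω (s j) * a j ≤
          ∑ i, ∑ j, star (a i) * ω (star (s i) * s j) * a j := by
  obtain ⟨ι, _ipre, _inon, _idir, u, e, hnet1, hnet2, M, hM0, hM⟩ := happrox
  haveI : (atTop : Filter ι).NeBot := atTop_neBot
  have hstar : ∀ s : S, ω (star s) = star (ω s) := by
    intro s
    have key := (hnet2 s).star
    have keq : (fun l => star (ω (s * star (u l)) * e l))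
        = fun l => star (e l) * ω (u l * star s) := by
      funext l
      rw [star_mul]
      congr 1
      simpa [star_star] using herm_aux ω hpd (star s) (star (u l))
    rw [keq] at key
    exact tendsto_nhds_unique (hnet1 (star s)) key
  refine ⟨hstar, ?_⟩
  set M' : ℝ := max M 1 with hM'def
  have hM'pos : (0:ℝ) < M' := lt_of_lt_of_le one_pos (le_max_right _ _)
  refine ⟨1 / M', by positivity, ?_⟩
  intro n s a
  set B := ∑ i, ∑ j, star (a i) * ω (star (s i) * s j) * a j with hBdef
  set T := ∑ j, ω (s j) * a j with hTdef
  have hLHS : star T * T = ∑ i, ∑ j, star (a i) * star (ω (s i)) * ω (s j) * a j := by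
    have hsT : star T = ∑ i, star (a i) * star (ω (s i)) := by
      rw [hTdef, star_sum]
      exact Finset.sum_congr rfl fun i _ => by rw [star_mul]
    rw [hsT, hTdef, Finset.sum_mul_sum]
    exact Finset.sum_congr rfl fun i _ => Finset.sum_congr rfl fun j _ => by
      simp [mul_assoc]
  set X : ι → A := fun l => ∑ j, star (e l) * ω (u l * s j) * a j with hXdef
  set ε : ℝ := 1 / M' with hεdef
  have hεpos : 0 < ε := by positivity
  have key : ∀ l, ε • (star (X l) * X l) ≤ B := by
    intro l
    set c0 : A := -(ε • X l) with hc0def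
    have hP0 : 0 ≤ star (e l) * ω (u l * star (u l)) * e l := by
      have := hpd 1 ![star (u l)] ![e l]
      simpa using this
    set Pl := star (e l) * ω (u l * star (u l)) * e l with hPldef
    have hXstar : star (X l) = ∑ i, star (a i) * (ω (star (s i) * star (u l)) * e l) := by
      rw [hXdef, star_sum]
      refine Finset.sum_congr rfl fun i _ => ?_
      rw [star_mul, star_mul, star_star]
      rw [show star (ω (u l * s i)) = ω (star (s i) * star (u l)) from by
        simpa [star_star] using herm_aux ω hpd (star (u l)) (s i)]
    have main := hpd (n+1) (Fin.cons (star (u l)) s) (Fin.cons (e l * c0) a)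
    rw [Fin.sum_univ_succ] at main
    simp only [Fin.sum_univ_succ, Fin.cons_zero, Fin.cons_succ, star_star] at main
    rw [Finset.sum_add_distrib] at main
    have t1 : star (e l * c0) * ω (u l * star (u l)) * (e l * c0)
        = star c0 * Pl * c0 := by
      rw [hPldef, star_mul]
      noncomm_ring
    have t2 : ∑ j, star (e l * c0) * ω (u l * s j) * a j = star c0 * X l := by
      rw [hXdef, Finset.mul_sum]
      refine Finset.sum_congr rfl fun j _ => ?_
      rw [star_mul]
      noncomm_ring
    have t3 : ∑ i, star (a i) * ω (star (s i) * star (u l)) * (e l * c0)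
        = star (X l) * c0 := by
      rw [hXstar, Finset.sum_mul]
      refine Finset.sum_congr rfl fun i _ => ?_
      noncomm_ring
    rw [t1, t2, t3, ← hBdef] at main
    -- main : 0 ≤ star c0 * Pl * c0 + star c0 * X l + (star (X l) * c0 + B) (up to grouping)
    have hsc0 : star c0 = -(ε • star (X l)) := by
      rw [hc0def, star_neg, star_smul, star_trivial]
    have e1 : star c0 * Pl * c0 = (ε * ε) • (star (X l) * Pl * X l) := by
      rw [hsc0, hc0def]
      simp [smul_mul_assoc, mul_smul_comm, smul_smul, mul_assoc]
    have e2 : star c0 * X l = -(ε • (star (X l) * X l)) := by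
      rw [hsc0]
      simp [smul_mul_assoc]
    have e3 : star (X l) * c0 = -(ε • (star (X l) * X l)) := by
      rw [hc0def]
      simp [mul_smul_comm]
    rw [e1, e2, e3] at main
    have step1 : star (X l) * Pl * X l ≤ M' • (star (X l) * X l) := by
      calc star (X l) * Pl * X l ≤ ‖Pl‖ • (star (X l) * X l) :=
            CStarAlgebra.star_left_conjugate_le_norm_smul (IsSelfAdjoint.of_nonneg hP0)
        _ ≤ M' • (star (X l) * X l) :=
            smul_le_smul_of_nonneg_right ((hM l).trans (le_max_left _ _))
              (star_mul_self_nonneg _)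
    have est : (ε * ε) • (star (X l) * Pl * X l) ≤ ε • (star (X l) * X l) := by
      calc (ε * ε) • (star (X l) * Pl * X l)
          ≤ (ε * ε) • (M' • (star (X l) * X l)) :=
            smul_le_smul_of_nonneg_left step1 (by positivity)
        _ = (ε * ε * M') • (star (X l) * X l) := by rw [smul_smul]
        _ = ε • (star (X l) * X l) := by
            congr 1
            rw [hεdef]
            field_simp
    have main' : 0 ≤ B - (ε • (star (X l) * X l)
        + (ε • (star (X l) * X l) - (ε * ε) • (star (X l) * Pl * X l))) := by
      calc (0:A) ≤ (ε * ε) • (star (X l) * Pl * X l) + -(ε • (star (X l) * X l))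
          + (-(ε • (star (X l) * X l)) + B) := main
        _ = B - (ε • (star (X l) * X l)
            + (ε • (star (X l) * X l) - (ε * ε) • (star (X l) * Pl * X l))) := by abel
    exact le_trans (le_add_of_nonneg_right (sub_nonneg.mpr est)) (sub_nonneg.mp main')
  have hXT : Tendsto X atTop (𝓝 T) := by
    rw [hTdef]
    exact tendsto_finset_sum _ fun j _ => (hnet1 (s j)).mul_const (a j)
  have hsmul : Tendsto (fun l => ε • (star (X l) * X l)) atTop (𝓝 (ε • (star T * T))) :=
    ((hXT.star.mul hXT).const_smul ε)
  have final : ε • (star T * T) ≤ B := le_of_tendsto hsmul (Eventually.of_forall key)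
  rwa [hLHS] at final
end

section
/- Let S be a *-semigroup, A a C*-algebra, E a Hilbert A-module, Φ a *-representation of S on E by bounded A-linear operators, v ∈ E, and define ω : S → A by ω(s) = ⟪v, Φ(s) v⟫. Then: (1) ω is A-positive definite; (2) ω(s⋆) = ω(s)⋆ for all s ∈ S; (3) for all n : ℕ, s : Fin n → S, a : Fin n → A one has ∑_{i,j} (a i)⋆ * ω(s i)⋆ * ω(s j) * (a j) ≤ ‖v‖² • ∑_{i,j} (a i)⋆ * ω((s i)⋆ * (s j)) * (a j); and (4) ‖a⋆ * ω(t⋆ * s⋆ * s * t) * a‖ ≤ ‖Φ(s)‖² · ‖a⋆ * ω(t⋆ * t) * a‖ for all s, t ∈ S and a ∈ A, so that ω satisfies the boundedness condition with the submultiplicative function s ↦ ‖Φ(s)‖². -/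
open scoped RightActions

/-- The December 2024 Mathlib `CStarModule` (right `A`-module via `SMul Aᵐᵒᵖ E`, inner product
`A`-linear on the right in the second variable). Mathlib's `CStarModule` now uses a left action. -/
class RightCStarModule (A E : Type*) [NonUnitalSemiring A] [StarRing A]
    [Module ℂ A] [AddCommGroup E] [Module ℂ E] [PartialOrder A] [SMul Aᵐᵒᵖ E] [Norm A] [Norm E]
    extends Inner A E where
  inner_add_right {x} {y} {z} : inner x (y + z) = inner x y + inner x z
  inner_self_nonneg {x} : 0 ≤ inner x x
  inner_self {x} : inner x x = 0 ↔ x = 0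
  inner_op_smul_right {a : A} {x y : E} : inner x (y <• a) = inner x y * a
  inner_smul_right_complex {z : ℂ} {x} {y} : inner x (z • y) = z • inner x y
  star_inner x y : star (inner x y) = inner y x
  norm_eq_sqrt_norm_inner_self x : ‖x‖ = Real.sqrt ‖inner x x‖

namespace RightCStarModule

section general

variable {A : Type*} [NonUnitalCStarAlgebra A] [PartialOrder A] [StarOrderedRing A]
  {E : Type*} [NormedAddCommGroup E] [NormedSpace ℂ E] [SMul Aᵐᵒᵖ E] [RightCStarModule A E]

lemma inner_add_left {x y z : E} : inner A (x + y) z = inner A x z + inner A y z := by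
  rw [← star_star (r := inner A (x + y) z)]
  simp only [star_inner, inner_add_right, star_add]

lemma inner_zero_right {x : E} : inner A x (0 : E) = 0 := by
  have h := inner_add_right (A := A) (x := x) (y := (0 : E)) (z := (0 : E))
  simpa using h

lemma inner_zero_left {x : E} : inner A (0 : E) x = 0 := by
  rw [← star_inner, inner_zero_right, star_zero]

lemma inner_neg_right {x y : E} : inner A x (-y) = -inner A x y := by
  have h := inner_add_right (A := A) (x := x) (y := y) (z := -y)
  rw [add_neg_cancel, inner_zero_right] at h
  exact (neg_eq_of_add_eq_zero_right h.symm).symm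

lemma inner_sub_right {x y z : E} : inner A x (y - z) = inner A x y - inner A x z := by
  rw [sub_eq_add_neg, inner_add_right, inner_neg_right, ← sub_eq_add_neg]

lemma inner_sub_left {x y z : E} : inner A (x - y) z = inner A x z - inner A y z := by
  rw [← star_inner, inner_sub_right, star_sub, star_inner, star_inner]

lemma inner_op_smul_left {a : A} {x y : E} : inner A (x <• a) y = star a * inner A x y := by
  rw [← star_inner, inner_op_smul_right, star_mul, star_inner]

lemma inner_smul_right_real {z : ℝ} {x y : E} : inner A x (z • y) = z • inner A x y := by
  have h₁ : z • y = (z : ℂ) • y := by simp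
  rw [h₁, inner_smul_right_complex]
  simp

lemma inner_smul_left_real {z : ℝ} {x y : E} : inner A (z • x) y = z • inner A x y := by
  rw [← star_inner, inner_smul_right_real, star_smul, star_inner, star_trivial]

lemma inner_sum_right {ι : Type*} {s : Finset ι} {x : E} {y : ι → E} :
    inner A x (∑ i ∈ s, y i) = ∑ i ∈ s, inner A x (y i) :=
  map_sum (AddMonoidHom.mk' (fun y => inner A x y) (fun _ _ => inner_add_right)) _ _

lemma inner_sum_left {ι : Type*} {s : Finset ι} {x : ι → E} {y : E} :
    inner A (∑ i ∈ s, x i) y = ∑ i ∈ s, inner A (x i) y :=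
  map_sum (AddMonoidHom.mk' (fun x => inner A x y) (fun _ _ => inner_add_left)) _ _

lemma norm_sq_eq {x : E} : ‖x‖ ^ 2 = ‖inner A x x‖ := by
  rw [norm_eq_sqrt_norm_inner_self (A := A) x, Real.sq_sqrt (norm_nonneg _)]

lemma inner_mul_inner_swap_le {x y : E} :
    inner A x y * inner A y x ≤ ‖y‖ ^ 2 • inner A x x := by
  rcases eq_or_ne y 0 with h | h
  · subst h
    simp [inner_zero_left, inner_zero_right]
  · have hs : inner A x y = star (inner A y x) := (star_inner y x).symm
    have key : (0 : A) ≤ ‖y‖ ^ 2 • (star (inner A y x) * inner A y x)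
        - ‖y‖ ^ 2 • (star (inner A y x) * inner A y x)
        - ‖y‖ ^ 2 • (star (inner A y x) * inner A y x)
        + ‖y‖ ^ 2 • (‖y‖ ^ 2 • inner A x x) := by
      calc (0 : A) ≤ inner A (y <• inner A y x - ‖y‖ ^ 2 • x)
            (y <• inner A y x - ‖y‖ ^ 2 • x) := inner_self_nonneg
        _ = star (inner A y x) * inner A y y * inner A y x
            - ‖y‖ ^ 2 • (star (inner A y x) * inner A y x)
            - ‖y‖ ^ 2 • (star (inner A y x) * inner A y x)
            + ‖y‖ ^ 2 • (‖y‖ ^ 2 • inner A x x) := by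
          simp only [inner_sub_left, inner_sub_right, inner_op_smul_left, inner_op_smul_right,
            inner_smul_left_real, inner_smul_right_real, hs, mul_smul_comm, smul_mul_assoc,
            mul_assoc, mul_sub, sub_mul, smul_sub]
          abel
        _ ≤ ‖y‖ ^ 2 • (star (inner A y x) * inner A y x)
            - ‖y‖ ^ 2 • (star (inner A y x) * inner A y x)
            - ‖y‖ ^ 2 • (star (inner A y x) * inner A y x)
            + ‖y‖ ^ 2 • (‖y‖ ^ 2 • inner A x x) := by
          gcongr
          rw [norm_sq_eq (A := A)]
          exact CStarAlgebra.star_left_conjugate_le_norm_smul (star_inner y y)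
    rw [sub_self, zero_sub, le_neg_add_iff_add_le, add_zero] at key
    rw [hs]
    exact (smul_le_smul_iff_of_pos_left (pow_pos (norm_pos_iff.mpr h) 2)).mp key

end general

end RightCStarModule

/-- Necessity part of the dilation theorem: if `ω(s) = ⟪v, Φ(s) v⟫` for a
*-representation `Φ` of a *-semigroup `S` on a Hilbert `A`-module `E`, then `ω` is
`A`-positive definite, Hermitian symmetric, satisfies the extension-property inequality with
constant `‖v‖²`, and satisfies the boundedness condition with `c(s) = ‖Φ(s)‖²`. -/
theorem dilation_necessity
    {S : Type*} [Semigroup S] [StarMul S]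
    {A : Type*} [NonUnitalCStarAlgebra A] [PartialOrder A] [StarOrderedRing A]
    {E : Type*} [NormedAddCommGroup E] [NormedSpace ℂ E] [SMul Aᵐᵒᵖ E]
    [RightCStarModule A E] [CompleteSpace E]
    (Φ : S → E →L[ℂ] E)
    (hA : ∀ (s : S) (x : E) (a : A), Φ s (x <• a) = (Φ s x) <• a)
    (hmul : ∀ s t : S, Φ (s * t) = (Φ s).comp (Φ t))
    (hstar : ∀ (s : S) (x y : E), inner (𝕜 := A) (Φ s x) y = inner (𝕜 := A) x (Φ (star s) y))
    (v : E) (ω : S → A) (hω : ∀ s : S, ω s = inner (𝕜 := A) v (Φ s v)) :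
    (∀ (n : ℕ) (s : Fin n → S) (a : Fin n → A),
      0 ≤ ∑ i, ∑ j, star (a i) * ω (star (s i) * s j) * a j) ∧
    (∀ s : S, ω (star s) = star (ω s)) ∧
    (∀ (n : ℕ) (s : Fin n → S) (a : Fin n → A),
      ∑ i, ∑ j, star (a i) * star (ω (s i)) * ω (s j) * a j ≤
        (‖v‖ ^ 2) • ∑ i, ∑ j, star (a i) * ω (star (s i) * s j) * a j) ∧
    (∀ (s t : S) (a : A),
      ‖star a * ω (star t * star s * s * t) * a‖ ≤
        ‖Φ s‖ ^ 2 * ‖star a * ω (star t * t) * a‖) := by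
  -- key: individual term
  have key : ∀ (s t : S) (a b : A),
      inner (𝕜 := A) ((Φ s v) <• a) ((Φ t v) <• b)
        = star a * ω (star s * t) * b := by
    intro s t a b
    rw [RightCStarModule.inner_op_smul_right, RightCStarModule.inner_op_smul_left,
      hstar, ← ContinuousLinearMap.comp_apply, ← hmul, hω]
  have gram : ∀ (n : ℕ) (s : Fin n → S) (a : Fin n → A),
      inner (𝕜 := A) (∑ i, (Φ (s i) v) <• a i) (∑ j, (Φ (s j) v) <• a j)
        = ∑ i, ∑ j, star (a i) * ω (star (s i) * s j) * a j := by
    intro n s a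
    rw [RightCStarModule.inner_sum_left]
    refine Finset.sum_congr rfl fun i _ => ?_
    rw [RightCStarModule.inner_sum_right]
    exact Finset.sum_congr rfl fun j _ => key _ _ _ _
  refine ⟨?_, ?_, ?_, ?_⟩
  · intro n s a
    rw [← gram]
    exact RightCStarModule.inner_self_nonneg
  · intro s
    rw [hω, hω, ← RightCStarModule.star_inner, hstar, star_star]
  · intro n s a
    set x := ∑ j, (Φ (s j) v) <• a j with hx
    have h1 : ∑ i, ∑ j, star (a i) * star (ω (s i)) * ω (s j) * a j
        = inner (𝕜 := A) x v * inner (𝕜 := A) v x := by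
      have hterm : ∀ j, ω (s j) * a j = inner (𝕜 := A) v ((Φ (s j) v) <• a j) := by
        intro j; rw [RightCStarModule.inner_op_smul_right, hω]
      have hx2 : inner (𝕜 := A) v x = ∑ j, ω (s j) * a j := by
        rw [hx, RightCStarModule.inner_sum_right]
        exact Finset.sum_congr rfl fun j _ => (hterm j).symm
      have hx1 : inner (𝕜 := A) x v = ∑ i, star (a i) * star (ω (s i)) := by
        rw [← RightCStarModule.star_inner, hx2, star_sum]
        exact Finset.sum_congr rfl fun i _ => by rw [star_mul]
      rw [hx1, hx2, Finset.sum_mul_sum]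
      refine Finset.sum_congr rfl fun i _ => Finset.sum_congr rfl fun j _ => by rw [mul_assoc]
    rw [h1, ← gram]
    exact RightCStarModule.inner_mul_inner_swap_le
  · intro s t a
    set w : E := (Φ t v) <• a with hw
    have h1 : star a * ω (star t * star s * s * t) * a
        = inner (𝕜 := A) (Φ s w) (Φ s w) := by
      rw [hw, hA, ← ContinuousLinearMap.comp_apply, ← hmul, key, star_mul, mul_assoc,
        mul_assoc, mul_assoc]
      exact (mul_assoc _ _ _).symm
    have h2 : star a * ω (star t * t) * a = inner (𝕜 := A) w w := by
      rw [hw, key]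
    rw [h1, h2, ← RightCStarModule.norm_sq_eq, ← RightCStarModule.norm_sq_eq]
    have := (Φ s).le_opNorm w
    calc ‖Φ s w‖ ^ 2 ≤ (‖Φ s‖ * ‖w‖) ^ 2 := by
          exact pow_le_pow_left₀ (norm_nonneg _) this 2
      _ = ‖Φ s‖ ^ 2 * ‖w‖ ^ 2 := by ring
end

section
/- Let S and A be C*-algebras and ω : S → A a linear map which is A-positive definite with respect to the multiplicative *-semigroup structure of S. Then for all s, t ∈ S, ω(t⋆ * s⋆ * s * t) ≤ ‖s‖² • ω(t⋆ * t) in A; consequently ‖a⋆ * ω(t⋆ * s⋆ * s * t) * a‖ ≤ ‖s‖² · ‖a⋆ * ω(t⋆ * t) * a‖ for all a ∈ A, i.e. ω satisfies the boundedness condition with c(s) = ‖s‖². -/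
lemma nonneg_of_forall_conjugate_nonneg
    {A : Type*} [NonUnitalCStarAlgebra A] [PartialOrder A] [StarOrderedRing A]
    {b : A} (h : ∀ a : A, 0 ≤ star a * b * a) : 0 ≤ b := by
  have hsa : IsSelfAdjoint b := by
    set c := b - star b with hc
    have hdiag : ∀ a : A, star a * c * a = 0 := by
      intro a
      have h1 : IsSelfAdjoint (star a * b * a) := IsSelfAdjoint.of_nonneg (h a)
      have h2 : star a * b * a = star a * star b * a := by
        conv_lhs => rw [← h1.star_eq]
        simp [mul_assoc, star_mul]
      simp [hc, sub_mul, mul_sub, ← h2]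
    have hzero : ∀ a a' : A, star a * c * a' = 0 := by
      intro a a'
      have e1 := hdiag (a + a')
      have e2 := hdiag (a + (Complex.I • a'))
      simp only [star_add, add_mul, mul_add, star_smul, smul_mul_assoc, mul_smul_comm,
        hdiag a, hdiag a', smul_zero, zero_add, add_zero] at e1 e2
      have e1' : star a * c * a' + star a' * c * a = 0 := by
        rw [← e1]; abel
      rw [show (star Complex.I) = -Complex.I by simp, neg_smul] at e2
      have e3 : Complex.I • (star a * c * a' - star a' * c * a) = 0 := by
        rw [smul_sub, sub_eq_add_neg, ← e2]; abel
      have e4 : star a * c * a' - star a' * c * a = 0 := by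
        rcases smul_eq_zero.mp e3 with h' | h'
        · exact absurd h' Complex.I_ne_zero
        · exact h'
      have := sub_eq_zero.mp e4
      have h2x : star a * c * a' + star a * c * a' = 0 := by
        nth_rewrite 2 [this]; exact e1'
      have h2s : (2 : ℝ) • (star a * c * a') = 0 := by
        rw [two_smul]; exact h2x
      rcases smul_eq_zero.mp h2s with h' | h'
      · norm_num at h'
      · exact h'
    have hcz : c = 0 := by
      have hmul : ∀ a' : A, c * a' = 0 := by
        intro a'
        have := hzero (c * a') a'
        rw [mul_assoc] at this
        exact (CStarRing.star_mul_self_eq_zero_iff _).mp this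
      have := hmul (star c)
      have : star (star c) * star c = 0 := by rwa [star_star]
      have := (CStarRing.star_mul_self_eq_zero_iff _).mp this
      simpa using this
    rw [hc, sub_eq_zero] at hcz
    exact hcz.symm
  -- now show the negative part vanishes
  have hneg : b⁻ = 0 := by
    have hbn : (0 : A) ≤ b⁻ := CFC.negPart_nonneg b
    have hsan : IsSelfAdjoint (b⁻) := IsSelfAdjoint.of_nonneg hbn
    have hcube_le : b⁻ * b⁻ * b⁻ ≤ 0 := by
      have := h (b⁻)
      rw [hsan.star_eq] at this
      have hb' : b⁻ * b * b⁻ = -(b⁻ * b⁻ * b⁻) := by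
        have h3 : b⁻ * b * b⁻ = b⁻ * (b⁺ - b⁻) * b⁻ := by
          rw [CFC.posPart_sub_negPart b hsa]
        rw [h3, mul_sub, sub_mul, CFC.negPart_mul_posPart]
        simp
      rw [hb'] at this
      exact neg_nonneg.mp (by simpa using this)
    have hcube_ge : (0 : A) ≤ b⁻ * b⁻ * b⁻ := by
      have := star_left_conjugate_nonneg hbn (b⁻)
      rwa [hsan.star_eq] at this
    have hcube : b⁻ * b⁻ * b⁻ = 0 := le_antisymm hcube_le hcube_ge
    have hsq : b⁻ * b⁻ = 0 := by
      have : star (b⁻ * b⁻) * (b⁻ * b⁻) = 0 := by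
        rw [star_mul, hsan.star_eq]
        calc b⁻ * b⁻ * (b⁻ * b⁻) = (b⁻ * b⁻ * b⁻) * b⁻ := by
              rw [← mul_assoc]
        _ = 0 := by rw [hcube]; simp
      exact (CStarRing.star_mul_self_eq_zero_iff _).mp this
    have : star (b⁻) * (b⁻) = 0 := by rw [hsan.star_eq]; exact hsq
    exact (CStarRing.star_mul_self_eq_zero_iff _).mp this
  calc (0:A) ≤ b⁺ := CFC.posPart_nonneg b
  _ = b⁺ - b⁻ := by rw [hneg, sub_zero]
  _ = b := CFC.posPart_sub_negPart b hsa

lemma exists_star_mul_self_eq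
    {S : Type*} [NonUnitalCStarAlgebra S] [PartialOrder S] [StarOrderedRing S]
    (s t : S) : ∃ x : S,
      star x * x = (‖s‖ ^ 2 : ℝ) • (star t * t) - star t * star s * s * t := by
  set u : Unitization ℂ S := algebraMap ℝ _ (‖s‖ ^ 2) - (star s * s : S) with hu_def
  have hnorm : ‖((star s * s : S) : Unitization ℂ S)‖ = ‖s‖ ^ 2 := by
    rw [Unitization.norm_inr, CStarRing.norm_star_mul_self, sq]
  have hsa : IsSelfAdjoint ((star s * s : S) : Unitization ℂ S) := by
    show star _ = _
    rw [← Unitization.inr_star, (IsSelfAdjoint.star_mul_self s).star_eq]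
  have hu : 0 ≤ u := by
    rw [hu_def, sub_nonneg, ← hnorm]
    exact IsSelfAdjoint.le_algebraMap_norm_self hsa
  set r : Unitization ℂ S := CFC.sqrt u with hr_def
  have hr : 0 ≤ r := CFC.sqrt_nonneg u
  have hrr : r * r = u := CFC.sqrt_mul_sqrt_self u hu
  have hrstar : star r = r := (IsSelfAdjoint.of_nonneg hr).star_eq
  refine ⟨r.fst • t + r.snd * t, ?_⟩
  have hx : ((r.fst • t + r.snd * t : S) : Unitization ℂ S) = r * (t : Unitization ℂ S) := by
    ext
    · simp
    · simp
  apply Unitization.inr_injective (R := ℂ)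
  rw [Unitization.inr_mul, Unitization.inr_star, hx, Unitization.inr_sub,
    Unitization.inr_smul]
  rw [star_mul, hrstar]
  rw [mul_assoc, ← mul_assoc r r, hrr, hu_def]
  rw [sub_mul, mul_sub, ← Algebra.smul_def, mul_smul_comm]
  rw [← Unitization.inr_star]
  congr 1
  · rw [Unitization.inr_mul]
  · simp only [Unitization.inr_mul, mul_assoc]

/-- A linear `A`-positive definite map `ω` between C*-algebras satisfies
`ω(t⋆ s⋆ s t) ≤ ‖s‖² • ω(t⋆ t)`, hence the boundedness condition with `c(s) = ‖s‖²`. -/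
theorem cstar_boundedness_condition
    {S : Type*} [NonUnitalCStarAlgebra S] [PartialOrder S] [StarOrderedRing S]
    {A : Type*} [NonUnitalCStarAlgebra A] [PartialOrder A] [StarOrderedRing A]
    (ω : S →ₗ[ℂ] A)
    (hpd : ∀ (n : ℕ) (s : Fin n → S) (a : Fin n → A),
      0 ≤ ∑ i, ∑ j, star (a i) * ω (star (s i) * s j) * a j) :
    ∀ s t : S,
      ω (star t * star s * s * t) ≤ (‖s‖ ^ 2) • ω (star t * t) ∧
      ∀ a : A, ‖star a * ω (star t * star s * s * t) * a‖ ≤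
        ‖s‖ ^ 2 * ‖star a * ω (star t * t) * a‖ := by
  intro s t
  have key : ∀ y : S, 0 ≤ ω (star y * y) := by
    intro y
    apply nonneg_of_forall_conjugate_nonneg
    intro a
    simpa using hpd 1 ![y] ![a]
  obtain ⟨x, hx⟩ := exists_star_mul_self_eq s t
  have h1 : 0 ≤ (‖s‖ ^ 2 : ℝ) • ω (star t * t) - ω (star t * star s * s * t) := by
    have := key x
    rwa [hx, map_sub, LinearMap.map_smul_of_tower] at this
  have hfirst : ω (star t * star s * s * t) ≤ (‖s‖ ^ 2) • ω (star t * t) :=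
    sub_nonneg.mp h1
  refine ⟨hfirst, fun a => ?_⟩
  have h0 : 0 ≤ ω (star t * star s * s * t) := by
    have := key (s * t)
    rwa [star_mul, ← mul_assoc] at this
  have hc1 : 0 ≤ star a * ω (star t * star s * s * t) * a := star_left_conjugate_nonneg h0 a
  have hc2 := star_left_conjugate_le_conjugate hfirst a
  rw [mul_smul_comm, smul_mul_assoc] at hc2
  calc ‖star a * ω (star t * star s * s * t) * a‖
      ≤ ‖(‖s‖ ^ 2 : ℝ) • (star a * ω (star t * t) * a)‖ :=
        CStarAlgebra.norm_le_norm_of_nonneg_of_le hc1 hc2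
    _ = ‖s‖ ^ 2 * ‖star a * ω (star t * t) * a‖ := by
        rw [norm_smul, Real.norm_of_nonneg (by positivity)]
end

section
/- Let S and A be C*-algebras with A unital, and let ω : S → A be a continuous linear map which is A-positive definite with respect to the multiplicative *-semigroup structure of S. Then ω(s⋆) = ω(s)⋆ for all s ∈ S, and for all n : ℕ, s : Fin n → S, a : Fin n → A one has ∑_{i,j} (a i)⋆ * ω(s i)⋆ * ω(s j) * (a j) ≤ ‖ω‖ • ∑_{i,j} (a i)⋆ * ω((s i)⋆ * (s j)) * (a j), where ‖ω‖ is the operator norm of ω. In particular ω has the extension property. -/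
open Filter Topology ComplexStarModule

private theorem cstar_ext_herm {S : Type*} [NonUnitalCStarAlgebra S] [PartialOrder S]
    [StarOrderedRing S] {A : Type*} [CStarAlgebra A] [PartialOrder A] [StarOrderedRing A]
    (ω : S →L[ℂ] A)
    (hpd : ∀ (n : ℕ) (s : Fin n → S) (a : Fin n → A),
      0 ≤ ∑ i, ∑ j, star (a i) * ω (star (s i) * s j) * a j) :
    ∀ s : S, ω (star s) = star (ω s) := by
  have h1 : ∀ q : S, 0 ≤ ω (star q * q) := fun q => by
    simpa using hpd 1 ![q] ![1]
  have h2 : ∀ p : S, 0 ≤ p → 0 ≤ ω p := by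
    intro p hp
    rw [StarOrderedRing.nonneg_iff] at hp
    induction hp using AddSubmonoid.closure_induction with
    | mem x hx => obtain ⟨q, rfl⟩ := hx; exact h1 q
    | zero => simp
    | add x y _ _ hx hy => rw [map_add]; exact add_nonneg hx hy
  have h3 : ∀ h : S, IsSelfAdjoint h → IsSelfAdjoint (ω h) := by
    intro h hh
    rw [← CFC.posPart_sub_negPart h hh, map_sub]
    exact ((h2 _ (CFC.posPart_nonneg h)).isSelfAdjoint).sub
      ((h2 _ (CFC.negPart_nonneg h)).isSelfAdjoint)
  intro s
  have hdecomp : (ℜ s : S) + Complex.I • (ℑ s : S) = s := realPart_add_I_smul_imaginaryPart s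
  have hR := h3 _ (ℜ s).2
  have hI := h3 _ (ℑ s).2
  calc ω (star s) = ω (star ((ℜ s : S) + Complex.I • (ℑ s : S))) := by rw [hdecomp]
    _ = ω (ℜ s) - Complex.I • ω (ℑ s) := by
        rw [star_add, star_smul, (ℜ s).2.star_eq, (ℑ s).2.star_eq]
        simp [map_add, map_smul, sub_eq_add_neg, Complex.conj_I, neg_smul]
    _ = star (ω s) := by
        conv_rhs => rw [← hdecomp]
        rw [map_add, map_smul, star_add, star_smul, hR.star_eq, hI.star_eq]
        simp [Complex.conj_I, sub_eq_add_neg]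

private theorem cstar_ext_key {S : Type*} [NonUnitalCStarAlgebra S] [PartialOrder S]
    [StarOrderedRing S] {A : Type*} [CStarAlgebra A] [PartialOrder A] [StarOrderedRing A]
    (ω : S →L[ℂ] A)
    (hpd : ∀ (n : ℕ) (s : Fin n → S) (a : Fin n → A),
      0 ≤ ∑ i, ∑ j, star (a i) * ω (star (s i) * s j) * a j)
    (hΩ : ∀ s : S, ω (star s) = star (ω s))
    (n : ℕ) (s : Fin n → S) (a : Fin n → A) (b : A) :
    0 ≤ (∑ i, ∑ j, star (a i) * ω (star (s i) * s j) * a j)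
      + star (∑ j, ω (s j) * a j) * b + star b * (∑ j, ω (s j) * a j)
      + ‖ω‖ • (star b * b) := by
  set Sg := ∑ i, ∑ j, star (a i) * ω (star (s i) * s j) * a j with hSg
  set X := ∑ j, ω (s j) * a j with hX
  set l := CStarAlgebra.approximateUnit S
  have hl := CStarAlgebra.increasingApproximateUnit S
  haveI : l.NeBot := hl.toIsApproximateUnit.neBot
  have hev : ∀ᶠ e in l, 0 ≤ Sg + (∑ i, star (a i) * ω (star (s i) * e) * b)
      + (∑ j, star b * ω (star e * s j) * a j) + ‖ω‖ • (star b * b) := by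
    filter_upwards [hl.eventually_nonneg, hl.eventually_norm] with e he hne
    have hsnoc := hpd (n+1) (Fin.snoc s e) (Fin.snoc a b)
    simp only [Fin.sum_univ_castSucc, Fin.snoc_castSucc, Fin.snoc_last,
      Finset.sum_add_distrib] at hsnoc
    have hcorner : star b * ω (star e * e) * b ≤ ‖ω‖ • (star b * b) := by
      have h1 : (0:A) ≤ ω (star e * e) := by simpa using hpd 1 ![e] ![1]
      have h2 : ω (star e * e) ≤ ‖ω‖ • (1:A) := by
        have h3 : ω (star e * e) ≤ ‖ω (star e * e)‖ • (1:A) := by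
          simpa [Algebra.algebraMap_eq_smul_one] using
            IsSelfAdjoint.le_algebraMap_norm_self h1.isSelfAdjoint
        refine h3.trans ?_
        rw [← sub_nonneg, ← sub_smul]
        refine smul_nonneg ?_ zero_le_one
        have := ω.le_opNorm (star e * e)
        have hee : ‖star e * e‖ ≤ 1 := by
          calc ‖star e * e‖ ≤ ‖star e‖ * ‖e‖ := norm_mul_le _ _
            _ ≤ 1 * 1 := by rw [norm_star]; exact mul_le_mul hne hne (norm_nonneg e) zero_le_one
            _ = 1 := one_mul 1
        nlinarith [norm_nonneg ω]
      calc star b * ω (star e * e) * b ≤ star b * (‖ω‖ • (1:A)) * b :=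
            star_left_conjugate_le_conjugate h2 b
        _ = ‖ω‖ • (star b * b) := by
            rw [mul_smul_comm, smul_mul_assoc, mul_one]
    have h0 : (0:A) ≤ Sg + (∑ j, star b * ω (star e * s j) * a j)
        + ((∑ i, star (a i) * ω (star (s i) * e) * b) + star b * ω (star e * e) * b) := hsnoc
    calc (0:A) ≤ _ := h0
      _ ≤ Sg + (∑ j, star b * ω (star e * s j) * a j)
            + ((∑ i, star (a i) * ω (star (s i) * e) * b) + ‖ω‖ • (star b * b)) := by gcongr
      _ = Sg + (∑ i, star (a i) * ω (star (s i) * e) * b)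
            + (∑ j, star b * ω (star e * s j) * a j) + ‖ω‖ • (star b * b) := by abel
  have t1 : Tendsto (fun e : S => ∑ i, star (a i) * ω (star (s i) * e) * b) l
      (𝓝 (star X * b)) := by
    have : star X * b = ∑ i, star (a i) * ω (star (s i)) * b := by
      rw [hX, star_sum, Finset.sum_mul]
      exact Finset.sum_congr rfl fun i _ => by rw [star_mul, hΩ]
    rw [this]
    exact tendsto_finset_sum _ fun i _ =>
      (((ω.continuous.tendsto _).comp (hl.tendsto_mul_left (star (s i)))).const_mul
        (star (a i))).mul_const b
  have t2 : Tendsto (fun e : S => ∑ j, star b * ω (star e * s j) * a j) l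
      (𝓝 (star b * X)) := by
    have : star b * X = ∑ j, star b * ω (s j) * a j := by
      rw [hX, Finset.mul_sum]
      exact Finset.sum_congr rfl fun j _ => by rw [← mul_assoc]
    rw [this]
    refine tendsto_finset_sum _ fun j _ => ?_
    have base : Tendsto (fun e : S => ω (star e * s j)) l (𝓝 (ω (s j))) := by
      refine ((ω.continuous.tendsto _).comp (hl.tendsto_mul_right (s j))).congr' ?_
      filter_upwards [hl.eventually_star_eq] with e he
      simp [Function.comp, he]
    exact (base.const_mul (star b)).mul_const (a j)
  have tend : Tendsto (fun e : S => Sg + (∑ i, star (a i) * ω (star (s i) * e) * b)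
      + (∑ j, star b * ω (star e * s j) * a j) + ‖ω‖ • (star b * b)) l
      (𝓝 (Sg + star X * b + star b * X + ‖ω‖ • (star b * b))) :=
    ((tendsto_const_nhds.add t1).add t2).add tendsto_const_nhds
  exact CStarAlgebra.isClosed_nonneg.mem_of_tendsto tend (hev.mono fun e h => h)

/-- A continuous linear `A`-positive definite map `ω` between C*-algebras, with
`A` unital, is Hermitian and satisfies
`∑ (a i)⋆ ω(s i)⋆ ω(s j) (a j) ≤ ‖ω‖ • ∑ (a i)⋆ ω((s i)⋆ (s j)) (a j)`;
in particular it has the extension property. -/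
theorem cstar_extension_property
    {S : Type*} [NonUnitalCStarAlgebra S] [PartialOrder S] [StarOrderedRing S]
    {A : Type*} [CStarAlgebra A] [PartialOrder A] [StarOrderedRing A]
    (ω : S →L[ℂ] A)
    (hpd : ∀ (n : ℕ) (s : Fin n → S) (a : Fin n → A),
      0 ≤ ∑ i, ∑ j, star (a i) * ω (star (s i) * s j) * a j) :
    (∀ s : S, ω (star s) = star (ω s)) ∧
    (∀ (n : ℕ) (s : Fin n → S) (a : Fin n → A),
      ∑ i, ∑ j, star (a i) * star (ω (s i)) * ω (s j) * a j ≤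
        ‖ω‖ • ∑ i, ∑ j, star (a i) * ω (star (s i) * s j) * a j) := by
  have hΩ := cstar_ext_herm ω hpd
  refine ⟨hΩ, fun n s a => ?_⟩
  set X := ∑ j, ω (s j) * a j with hX
  have hLHS : (∑ i, ∑ j, star (a i) * star (ω (s i)) * ω (s j) * a j) = star X * X := by
    rw [hX, star_sum, Finset.sum_mul_sum]
    refine Finset.sum_congr rfl fun i _ => Finset.sum_congr rfl fun j _ => ?_
    simp [star_mul, mul_assoc]
  obtain h0 | hc := eq_or_lt_of_le (norm_nonneg ω)
  · have hω : ω = 0 := by rwa [eq_comm, norm_eq_zero] at h0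
    simp [hω]
  · have key := cstar_ext_key ω hpd hΩ n s a ((-‖ω‖⁻¹ : ℝ) • X)
    have hstar : star ((-‖ω‖⁻¹ : ℝ) • X) = (-‖ω‖⁻¹ : ℝ) • star X := by
      rw [star_smul, star_trivial]
    rw [hstar, mul_smul_comm, smul_mul_assoc, smul_mul_assoc, mul_smul_comm,
      smul_smul, smul_smul] at key
    have hcc : ‖ω‖ * -‖ω‖⁻¹ * -‖ω‖⁻¹ = ‖ω‖⁻¹ := by field_simp
    rw [hcc] at key
    have key2 : (0:A) ≤ (∑ i, ∑ j, star (a i) * ω (star (s i) * s j) * a j)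
        - ‖ω‖⁻¹ • (star X * X) := by
      convert key using 1
      module
    rw [hLHS, ← sub_nonneg]
    have h3 := smul_nonneg hc.le key2
    rwa [smul_sub, smul_smul, mul_inv_cancel₀ hc.ne', one_smul] at h3
end
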